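/- The homomorphism γ : F₂ → Z₃ * Z₃ sending the free generators y₁ ↦ w₁ w₂⁻¹ and y₂ ↦ w₁⁻¹ w₂ is injective, where w₁, w₂ are the order-three generators of the two free factors. -/

import Mathlib

/-- The free product `Z₃ * Z₃`, presented on two generators `w₀, w₁`
with relations `wᵢ³ = 1`. -/
def Z3Free2 : Type :=
  PresentedGroup {r : FreeGroup (Fin 2) | ∃ i : Fin 2, r = (FreeGroup.of i) ^ 3}

noncomputable instance : Group Z3Free2 := by unfold Z3Free2; infer_instance

/-- The canonical order-three generators of `Z₃ * Z₃`. -/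
noncomputable def w (i : Fin 2) : Z3Free2 :=
  PresentedGroup.of (rels := {r : FreeGroup (Fin 2) | ∃ i : Fin 2, r = (FreeGroup.of i) ^ 3}) i


namespace Z3PP

open Monoid Monoid.CoprodI

abbrev M3 : Type := Multiplicative (ZMod 3)
abbrev H : Fin 2 → Type := fun _ => M3

def g (i : Fin 2) : CoprodI H := CoprodI.of (M := H) (i := i) (Multiplicative.ofAdd 1)

theorem toList_of_smul {i : Fin 2} (m : H i) (hm : m ≠ 1) (w : Word H)
    (hw : w.fstIdx ≠ some i) :
    (CoprodI.of (M := H) m • w).toList = ⟨i, m⟩ :: w.toList := by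
  rw [← Word.cons_eq_smul (m := m) (ls := w) (h1 := hw) (h2 := hm)]
  rfl

theorem toList_of_smul_cancel {i : Fin 2} (m m' : H i) {t : List (Σ j, H j)} {w : Word H}
    (hw : w.toList = ⟨i, m'⟩ :: t) (hmm' : m * m' ≠ 1) :
    (CoprodI.of (M := H) m • w).toList = ⟨i, m * m'⟩ :: t := by
  have hm' : m' ≠ 1 := w.ne_one ⟨i, m'⟩ (by rw [hw]; exact List.mem_cons_self)
  have hchain : t.Chain' fun l l' => Sigma.fst l ≠ Sigma.fst l' := by
    have := w.chain_ne; rw [hw] at this; exact this.tail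
  have hne : ∀ l ∈ t, Sigma.snd l ≠ 1 := fun l hl =>
    w.ne_one l (by rw [hw]; exact List.mem_cons_of_mem _ hl)
  let w' : Word H := ⟨t, hne, hchain⟩
  have hfst : w'.fstIdx ≠ some i := by
    have := w.chain_ne
    rw [hw] at this
    rcases List.isChain_cons.1 this with ⟨h1, -⟩
    cases ht : t.head? with
    | none => simp [Word.fstIdx, w', ht]
    | some l =>
      have := h1 l ht
      simp [Word.fstIdx, w', ht]
      exact fun h => (this h.symm).elim
  have hweq : w = CoprodI.of (M := H) m' • w' := by
    rw [← Word.cons_eq_smul (m := m') (ls := w') (h1 := hfst) (h2 := hm')]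
    exact Word.ext hw
  rw [hweq, smul_smul, ← MonoidHom.map_mul]
  exact toList_of_smul (m * m') hmm' w' hfst

theorem head_of_pair_smul {j k : Fin 2} (hjk : j ≠ k) (p q : M3) (hp : p ≠ 1) (hq : q ≠ 1)
    (w : Word H) (hw : w.toList.head? ≠ some ⟨k, q⁻¹⟩) :
    ((CoprodI.of (M := H) (i := j) p * CoprodI.of (M := H) (i := k) q) • w).toList.head?
      = some ⟨j, p⟩ := by
  obtain ⟨m1, t, h1, hm1⟩ : ∃ (m1 : M3) (t : List (Σ j, H j)),
      (CoprodI.of (M := H) (i := k) q • w).toList = ⟨k, m1⟩ :: t ∧ m1 ≠ 1 := by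
    cases hlist : w.toList with
    | nil =>
      exact ⟨q, [], by rw [toList_of_smul q hq w (by simp [Word.fstIdx, hlist]), hlist], hq⟩
    | cons l t =>
      obtain ⟨i, m'⟩ := l
      by_cases hk : i = k
      · subst hk
        have hm'q : m' ≠ q⁻¹ := by
          intro h; subst h; exact hw (by rw [hlist]; rfl)
        have hqm' : q * m' ≠ 1 := by
          intro h; exact hm'q (by rw [mul_comm] at h; exact eq_inv_of_mul_eq_one_left h)
        exact ⟨q * m', t, toList_of_smul_cancel q m' hlist hqm', hqm'⟩
      · exact ⟨q, w.toList, toList_of_smul q hq w (by simp [Word.fstIdx, hlist, hk]), hq⟩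
  rw [mul_smul]
  have hfst2 : (CoprodI.of (M := H) (i := k) q • w).fstIdx ≠ some j := by
    simp only [Word.fstIdx, h1, List.head?_cons, Option.map_some]
    exact fun h => hjk (by injection h; omega)
  rw [toList_of_smul p hp _ hfst2]
  rfl

end Z3PP

namespace Z3PP
open Monoid Monoid.CoprodI Pointwise

def e (b : Bool) : M3 := Multiplicative.ofAdd (if b then 2 else 1)

noncomputable def a (b : Bool) : CoprodI H := if b then (g 0)⁻¹ * g 1 else g 0 * (g 1)⁻¹

def X (b : Bool) : Set (Word H) := {w | w.toList.head? = some ⟨0, e b⟩}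
def Y (b : Bool) : Set (Word H) := {w | w.toList.head? = some ⟨1, e b⟩}

theorem singleton_word (i : Fin 2) (m : M3) (hm : m ≠ 1) :
    ∃ w : Word H, w.toList = [⟨i, m⟩] :=
  ⟨⟨[⟨i, m⟩], fun l hl => by simp at hl; subst hl; exact hm, List.isChain_singleton _⟩, rfl⟩

theorem hXnonempty : ∀ b, (X b).Nonempty := by
  intro b
  obtain ⟨w, hw⟩ := singleton_word 0 (e b) (by cases b <;> decide)
  exact ⟨w, by simp [X, hw]⟩

theorem head_disj {i i' : Fin 2} {b c : Bool} (h : (⟨i, e b⟩ : Σ j, H j) ≠ ⟨i', e c⟩) :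
    Disjoint {w : Word H | w.toList.head? = some ⟨i, e b⟩}
      {w : Word H | w.toList.head? = some ⟨i', e c⟩} := by
  rw [Set.disjoint_left]
  intro w h1 h2
  rw [Set.mem_setOf_eq] at h1 h2
  rw [h1] at h2
  exact h (by injection h2)

theorem hXdisj : Pairwise (Function.onFun Disjoint X) := by
  intro b c hbc
  exact head_disj (by cases b <;> cases c <;> first | decide | simp at hbc)

theorem hYdisj : Pairwise (Function.onFun Disjoint Y) := by
  intro b c hbc
  exact head_disj (by cases b <;> cases c <;> first | decide | simp at hbc)

theorem hXYdisj : ∀ b c, Disjoint (X b) (Y c) := by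
  intro b c
  exact head_disj (by cases b <;> cases c <;> decide)

theorem key_hX : ∀ b, a b • (Y b)ᶜ ⊆ X b := by
  rintro b v ⟨u, hu, rfl⟩
  have hu' : u.toList.head? ≠ some ⟨(1 : Fin 2), e b⟩ := hu
  show _ ∈ X b
  cases b
  · have ha : a false = CoprodI.of (M := H) (i := 0) (e false) *
        CoprodI.of (M := H) (i := 1) ((e false)⁻¹) := by
      show g 0 * (g 1)⁻¹ = _
      rw [g, g, ← MonoidHom.map_inv]
      rfl
    rw [ha]
    exact head_of_pair_smul (by decide) _ _ (by decide) (by decide) u (by simpa using hu')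
  · have ha : a true = CoprodI.of (M := H) (i := 0) (e true) *
        CoprodI.of (M := H) (i := 1) ((e true)⁻¹) := by
      have h1 : (Multiplicative.ofAdd (1 : ZMod 3))⁻¹ = e true := by decide
      have h2 : (e true)⁻¹ = Multiplicative.ofAdd (1 : ZMod 3) := by decide
      show (g 0)⁻¹ * g 1 = _
      rw [g, g, ← MonoidHom.map_inv, h1, ← h2]
    rw [ha]
    exact head_of_pair_smul (by decide) _ _ (by decide) (by decide) u (by simpa using hu')

theorem key_hY : ∀ b, a⁻¹ b • (X b)ᶜ ⊆ Y b := by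
  rintro b v ⟨u, hu, rfl⟩
  have hu' : u.toList.head? ≠ some ⟨(0 : Fin 2), e b⟩ := hu
  show _ ∈ Y b
  cases b
  · have ha : a⁻¹ false = CoprodI.of (M := H) (i := 1) (e false) *
        CoprodI.of (M := H) (i := 0) ((e false)⁻¹) := by
      show (g 0 * (g 1)⁻¹)⁻¹ = _
      rw [mul_inv_rev, inv_inv, g, g, ← MonoidHom.map_inv]
      rfl
    rw [ha]
    exact head_of_pair_smul (by decide) _ _ (by decide) (by decide) u (by simpa using hu')
  · have ha : a⁻¹ true = CoprodI.of (M := H) (i := 1) (e true) *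
        CoprodI.of (M := H) (i := 0) ((e true)⁻¹) := by
      have h1 : (Multiplicative.ofAdd (1 : ZMod 3))⁻¹ = e true := by decide
      have h2 : (e true)⁻¹ = Multiplicative.ofAdd (1 : ZMod 3) := by decide
      show ((g 0)⁻¹ * g 1)⁻¹ = _
      rw [mul_inv_rev, inv_inv, g, g, ← MonoidHom.map_inv, h1, ← h2]
    rw [ha]
    exact head_of_pair_smul (by decide) _ _ (by decide) (by decide) u (by simpa using hu')

theorem a_lift_injective : Function.Injective (FreeGroup.lift a) :=
  FreeGroup.injective_lift_of_ping_pong a X Y hXnonempty hXdisj hYdisj hXYdisj key_hX key_hY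

end Z3PP


open Monoid in
/-- The homomorphism `γ : F₂ → Z₃ * Z₃` sending the free generators
`y₁ ↦ w₁ w₂⁻¹` and `y₂ ↦ w₁⁻¹ w₂` is injective. -/
theorem freeGroup_two_embeds_in_Z3_free_product_two :
    Function.Injective
      (FreeGroup.lift (fun b : Bool =>
        if b then (w 0)⁻¹ * w 1 else w 0 * (w 1)⁻¹)) := by
  have hrel : ∀ r ∈ {r : FreeGroup (Fin 2) | ∃ i : Fin 2, r = (FreeGroup.of i) ^ 3},
      FreeGroup.lift Z3PP.g r = 1 := by
    rintro r ⟨i, rfl⟩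
    rw [map_pow]
    show (Z3PP.g i) ^ 3 = 1
    rw [Z3PP.g, ← MonoidHom.map_pow]
    have h3 : (Multiplicative.ofAdd (1 : ZMod 3)) ^ 3 = 1 := by decide
    rw [h3, MonoidHom.map_one]
  let φ : Z3Free2 →* CoprodI Z3PP.H := PresentedGroup.toGroup hrel
  have hw : ∀ i, φ (w i) = Z3PP.g i := fun i => PresentedGroup.toGroup.of hrel
  have hcomp : φ.comp (FreeGroup.lift (fun b : Bool =>
      if b then (w 0)⁻¹ * w 1 else w 0 * (w 1)⁻¹)) = FreeGroup.lift Z3PP.a := by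
    ext b
    simp only [MonoidHom.comp_apply, FreeGroup.lift_apply_of]
    cases b <;> simp [Z3PP.a, hw]
  have hinj : Function.Injective (⇑φ ∘ ⇑(FreeGroup.lift (fun b : Bool =>
      if b then (w 0)⁻¹ * w 1 else w 0 * (w 1)⁻¹))) := by
    rw [← MonoidHom.coe_comp, hcomp]
    exact Z3PP.a_lift_injective
  exact hinj.of_comp
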